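/- Let (C, W) be a category with weak equivalences satisfying the 'common fork' condition. Then the relation R_ℓ^c is transitive (hence an equivalence relation, being reflexive and symmetric), where f R_ℓ^c g iff there exists a commutative diagram with arrows α : A → C, σ : Ã → C a weak equivalence, ∂₀, ∂₁ : A → Ã with σ∂₀ = σ∂₁ = α, and h : Ã → B with h∂₀ = f, h∂₁ = g. -/
import Mathlib


open CategoryTheory

variable {C : Type*} [Category C]

/-- `f R_ℓ^c g`: there is a left homotopy diagram through a weak equivalence `σ`. -/
def RlC (W : MorphismProperty C) : HomRel C :=
  fun {A B} f g => ∃ (Z At : C) (α : A ⟶ Z) (σ : At ⟶ Z) (d0 d1 : A ⟶ At) (h : At ⟶ B),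
    W σ ∧ d0 ≫ σ = α ∧ d1 ≫ σ = α ∧ d0 ≫ h = f ∧ d1 ≫ h = g

/-- `f R_r^c g`: there is a right homotopy diagram through a weak equivalence `s`. -/
def RrC (W : MorphismProperty C) : HomRel C :=
  fun {A B} f g => ∃ (Z Bt : C) (β : Z ⟶ B) (s : Z ⟶ Bt) (d0 d1 : Bt ⟶ B) (k : A ⟶ Bt),
    W s ∧ s ≫ d0 = β ∧ s ≫ d1 = β ∧ k ≫ d0 = f ∧ k ≫ d1 = g

/-- The "common fork" condition, left version: two pairs of `R_ℓ^c`-related arrows admit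
homotopies with respect to a common fork of weak equivalences (both `α` and `σ` in `W`). -/
def CommonForkLeft (W : MorphismProperty C) : Prop :=
  ∀ {A B : C} (f g f' g' : A ⟶ B), RlC W f g → RlC W f' g' →
    ∃ (Z At : C) (α : A ⟶ Z) (σ : At ⟶ Z) (d0 d1 : A ⟶ At),
      W σ ∧ W α ∧ d0 ≫ σ = α ∧ d1 ≫ σ = α ∧
      ∃ (h h' : At ⟶ B), d0 ≫ h = f ∧ d1 ≫ h = g ∧ d0 ≫ h' = f' ∧ d1 ≫ h' = g'

/-- The "common fork" condition, right version. -/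
def CommonForkRight (W : MorphismProperty C) : Prop :=
  ∀ {A B : C} (f g f' g' : A ⟶ B), RrC W f g → RrC W f' g' →
    ∃ (Z Bt : C) (β : Z ⟶ B) (s : Z ⟶ Bt) (d0 d1 : Bt ⟶ B),
      W s ∧ W β ∧ s ≫ d0 = β ∧ s ≫ d1 = β ∧
      ∃ (k k' : A ⟶ Bt), k ≫ d0 = f ∧ k ≫ d1 = g ∧ k' ≫ d0 = f' ∧ k' ≫ d1 = g'

/-- `R_ℓ^c` is reflexive when `W` contains identities. -/
lemma RlC.refl' (W : MorphismProperty C) [W.ContainsIdentities] {A B : C} (f : A ⟶ B) :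
    RlC W f f :=
  ⟨A, A, 𝟙 A, 𝟙 A, 𝟙 A, 𝟙 A, f, W.id_mem A, by simp, by simp, by simp, by simp⟩

/-- `R_ℓ^c` is symmetric. -/
lemma RlC.symm' (W : MorphismProperty C) {A B : C} {f g : A ⟶ B} (h : RlC W f g) :
    RlC W g f := by
  obtain ⟨Z, At, α, σ, d0, d1, h, hσ, h0, h1, hf, hg⟩ := h
  exact ⟨Z, At, α, σ, d1, d0, h, hσ, h1, h0, hg, hf⟩

/-- Under the common fork condition, left homotopic maps are right homotopic. -/
lemma RlC.toRrC (W : MorphismProperty C) [W.ContainsIdentities] [W.HasTwoOutOfThreeProperty]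
    (hl : CommonForkLeft W) {A B : C} {f g : A ⟶ B} (hfg : RlC W f g) : RrC W f g := by
  obtain ⟨Z, At, α, σ, d0, d1, hσ, hα, h0, h1, h, h', hf1, hf2, hf3, hg⟩ :=
    hl f f f g (RlC.refl' W f) hfg
  have hd0 : W d0 := W.of_postcomp d0 σ hσ (by rw [h0]; exact hα)
  exact ⟨A, At, f, d0, h, h', d1, hd0, hf1, hf3, hf2, hg⟩

/-- Proposition 3.24: if `(C, W)` satisfies the "common fork" condition then `R_ℓ^c`
is transitive. -/
theorem stmt11 (W : MorphismProperty C) [W.ContainsIdentities]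
    [W.HasTwoOutOfThreeProperty] (hl : CommonForkLeft W) (hr : CommonForkRight W)
    {A B : C} (f₁ f₂ f₃ : A ⟶ B) (h12 : RlC W f₁ f₂) (h23 : RlC W f₂ f₃) :
    RlC W f₁ f₃ := by
  have r21 : RrC W f₂ f₁ := RlC.toRrC W hl (RlC.symm' W h12)
  have r23 : RrC W f₂ f₃ := RlC.toRrC W hl h23
  obtain ⟨Z, Bt, β, s, e0, e1, hs, hβ, hse0, hse1, k, k', hk0, hk1, hk0', hk1'⟩ :=
    hr f₂ f₁ f₂ f₃ r21 r23
  have he0 : W e0 := W.of_precomp s e0 hs (by rw [hse0]; exact hβ)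
  exact ⟨B, Bt, k ≫ e0, e0, k, k', e1, he0, rfl, by rw [hk0', hk0], hk1, hk1'⟩
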